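/- For every j ∈ {1,…,ℓ} and every m = (m₁,…,m_ℓ) ∈ ℕ^ℓ with m_i = 0 for all i > j, it holds that h(A^m · A_j) = ((1 − q^{2(j+|m|)})/(1 − q^{2(N+|m|)})) · h(A^m). -/

import Mathlib

noncomputable section

/-- The partial sum `A_j = Σ_{i=1}^{j} z_i z_i*` (indices of `z` shifted to start at `0`). -/
def Apart {A : Type*} [Ring A] [StarRing A] {N : ℕ} (z : Fin N → A) (j : ℕ) : A :=
  ∑ i ∈ Finset.univ.filter (fun i : Fin N => (i : ℕ) < j), z i * star (z i)

/-- The ordered monomial `A^m = A₁^{m₁} ⋯ A_ℓ^{m_ℓ}`. -/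
def Apow {A : Type*} [Ring A] [StarRing A] {ℓ : ℕ} (z : Fin (ℓ + 1) → A) (m : Fin ℓ → ℕ) : A :=
  ((List.finRange ℓ).map (fun k : Fin ℓ => Apart z ((k : ℕ) + 1) ^ m k)).prod

section Comm
variable {A : Type*} [Ring A] [Algebra ℂ A] [StarRing A] [StarModule ℂ A]
  (q : ℝ) {N : ℕ} (z : Fin N → A)
  (hcomm : ∀ i j : Fin N, i < j → z i * z j = (q : ℂ) • (z j * z i))
  (hstar : ∀ i j : Fin N, i ≠ j → star (z i) * z j = (q : ℂ) • (z j * star (z i)))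

include hcomm hstar

set_option linter.unusedSectionVars false

/-- `B_i * z_k = q² • (z_k * B_i)` for `i < k`. -/
lemma B_mul_z (i k : Fin N) (hik : i < k) :
    (z i * star (z i)) * z k = ((q : ℂ) ^ 2) • (z k * (z i * star (z i))) := by
  have h1 : star (z i) * z k = (q : ℂ) • (z k * star (z i)) := hstar i k (ne_of_lt hik)
  have h2 : z i * z k = (q : ℂ) • (z k * z i) := hcomm i k hik
  calc (z i * star (z i)) * z k = z i * (star (z i) * z k) := by rw [mul_assoc]
    _ = (q : ℂ) • (z i * z k * star (z i)) := by rw [h1, mul_smul_comm, mul_assoc]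
    _ = ((q : ℂ) ^ 2) • (z k * (z i * star (z i))) := by
        rw [h2, smul_mul_assoc, smul_smul, mul_assoc, sq]

/-- `star z_k * B_i = q² • (B_i * star z_k)` for `i < k`. -/
lemma starz_mul_B (i k : Fin N) (hik : i < k) :
    star (z k) * (z i * star (z i)) = ((q : ℂ) ^ 2) • ((z i * star (z i)) * star (z k)) := by
  have h1 : star (z k) * z i = (q : ℂ) • (z i * star (z k)) := hstar k i (ne_of_gt hik)
  have h2 : star (z k) * star (z i) = (q : ℂ) • (star (z i) * star (z k)) := by
    have := congrArg star (hcomm i k hik)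
    rw [star_mul, star_smul, star_mul] at this
    simpa using this
  calc star (z k) * (z i * star (z i)) = (star (z k) * z i) * star (z i) := by rw [mul_assoc]
    _ = (q : ℂ) • (z i * (star (z k) * star (z i))) := by rw [h1, smul_mul_assoc, mul_assoc]
    _ = ((q : ℂ) ^ 2) • ((z i * star (z i)) * star (z k)) := by
        rw [h2, mul_smul_comm, smul_smul, sq, ← mul_assoc]

/-- `A_n * z_k = q² • (z_k * A_n)` for `n ≤ k`. -/
lemma Apart_mul_z (n : ℕ) (k : Fin N) (hnk : n ≤ (k : ℕ)) :
    Apart z n * z k = ((q : ℂ) ^ 2) • (z k * Apart z n) := by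
  unfold Apart
  rw [Finset.sum_mul, Finset.mul_sum, Finset.smul_sum]
  refine Finset.sum_congr rfl fun i hi => ?_
  rw [Finset.mem_filter] at hi
  rw [B_mul_z q z hcomm hstar i k (by omega : (i:ℕ) < (k:ℕ))]

lemma starz_mul_Apart (n : ℕ) (k : Fin N) (hnk : n ≤ (k : ℕ)) :
    star (z k) * Apart z n = ((q : ℂ) ^ 2) • (Apart z n * star (z k)) := by
  unfold Apart
  rw [Finset.mul_sum, Finset.sum_mul, Finset.smul_sum]
  refine Finset.sum_congr rfl fun i hi => ?_
  rw [Finset.mem_filter] at hi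
  exact starz_mul_B q z hcomm hstar i k (by omega : (i:ℕ) < (k:ℕ))

lemma Apart_pow_mul_z (n : ℕ) (e : ℕ) (k : Fin N) (hnk : n ≤ (k : ℕ)) :
    Apart z n ^ e * z k = (((q : ℂ) ^ 2) ^ e) • (z k * Apart z n ^ e) := by
  induction e with
  | zero => simp
  | succ e ih =>
      rw [pow_succ, mul_assoc, Apart_mul_z q z hcomm hstar n k hnk, mul_smul_comm,
        ← mul_assoc, ih, smul_mul_assoc, smul_smul]
      simp only [mul_assoc]
      match_scalars <;> ring

lemma starz_mul_Apart_pow (n : ℕ) (e : ℕ) (k : Fin N) (hnk : n ≤ (k : ℕ)) :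
    star (z k) * Apart z n ^ e = (((q : ℂ) ^ 2) ^ e) • (Apart z n ^ e * star (z k)) := by
  induction e with
  | zero => simp
  | succ e ih =>
      rw [pow_succ, ← mul_assoc, ih, smul_mul_assoc, mul_assoc,
        starz_mul_Apart q z hcomm hstar n k hnk, mul_smul_comm, smul_smul, ← mul_assoc]
      simp only [mul_assoc]
      match_scalars <;> ring

end Comm

section Pow
variable {A : Type*} [Ring A] [Algebra ℂ A] [StarRing A] [StarModule ℂ A]
  (q : ℝ) {ℓ : ℕ} (z : Fin (ℓ + 1) → A)
  (hcomm : ∀ i j : Fin (ℓ + 1), i < j → z i * z j = (q : ℂ) • (z j * z i))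
  (hstar : ∀ i j : Fin (ℓ + 1), i ≠ j → star (z i) * z j = (q : ℂ) • (z j * star (z i)))
  (m : Fin ℓ → ℕ)

set_option linter.unusedSectionVars false

include hcomm hstar in
lemma starz_mul_listprod (L : List (Fin ℓ)) (k : Fin (ℓ + 1))
    (hL : ∀ i ∈ L, (i : ℕ) + 1 ≤ (k : ℕ) ∨ m i = 0) :
    star (z k) * (L.map (fun i : Fin ℓ => Apart z ((i : ℕ) + 1) ^ m i)).prod
      = (((q : ℂ) ^ 2) ^ ((L.map m).sum)) •
          ((L.map (fun i : Fin ℓ => Apart z ((i : ℕ) + 1) ^ m i)).prod * star (z k)) := by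
  induction L with
  | nil => simp
  | cons i L ih =>
      have hi := hL i List.mem_cons_self
      have hfi : star (z k) * Apart z ((i : ℕ) + 1) ^ m i
          = (((q : ℂ) ^ 2) ^ m i) • (Apart z ((i : ℕ) + 1) ^ m i * star (z k)) := by
        rcases hi with hi | hi
        · exact starz_mul_Apart_pow q z hcomm hstar _ _ k hi
        · simp [hi]
      have ih' := ih (fun i hi => hL i (List.mem_cons_of_mem _ hi))
      simp only [List.map_cons, List.prod_cons, List.sum_cons]
      rw [← mul_assoc, hfi, smul_mul_assoc, mul_assoc, ih', mul_smul_comm, smul_smul,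
        pow_add, ← mul_assoc]

include hcomm hstar in
lemma starz_mul_Apow (k : Fin (ℓ + 1)) (j : ℕ) (hjk : j ≤ (k : ℕ))
    (hm : ∀ i : Fin ℓ, j ≤ (i : ℕ) → m i = 0) :
    star (z k) * Apow z m = (((q : ℂ) ^ 2) ^ (∑ i, m i)) • (Apow z m * star (z k)) := by
  have hsum : ∑ i, m i = ((List.finRange ℓ).map m).sum := by
    rw [← Fin.sum_univ_def]
  rw [Apow, hsum, starz_mul_listprod q z hcomm hstar m _ k]
  intro i _
  rcases le_or_gt (i + 1 : ℕ) k with h' | h'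
  · exact Or.inl h'
  · exact Or.inr (hm i (by omega))

lemma Apart_succ (k : ℕ) (hk : k < ℓ + 1) :
    Apart z (k + 1) = Apart z k + z ⟨k, hk⟩ * star (z ⟨k, hk⟩) := by
  have hset : Finset.univ.filter (fun i : Fin (ℓ+1) => (i:ℕ) < k+1)
      = insert (⟨k, hk⟩ : Fin (ℓ+1)) (Finset.univ.filter (fun i : Fin (ℓ+1) => (i:ℕ) < k)) := by
    ext i
    simp only [Finset.mem_filter, Finset.mem_insert, Finset.mem_univ, true_and,
      Fin.ext_iff, Nat.lt_succ_iff_lt_or_eq]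
    tauto
  rw [Apart, Apart, hset, Finset.sum_insert (by simp), add_comm]

lemma Apart_top (hsum : ∑ i : Fin (ℓ + 1), z i * star (z i) = 1) :
    Apart z (ℓ + 1) = 1 := by
  rw [← hsum]
  unfold Apart
  apply Finset.sum_congr _ (fun _ _ => rfl)
  simp [Finset.filter_true_of_mem, Fin.is_lt]
  exact fun x => Nat.lt_succ_iff.mp x.is_lt

end Pow

/-- Let `z₁,…,z_N` satisfy the quantum sphere relations in a unital
`ℂ`-`*`-algebra and let `h` be a normalized linear functional satisfying the modular
relations for the Haar state of `SU_q(N)`. Then for every `j ∈ {1,…,ℓ}` and every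
`m ∈ ℕ^ℓ` with `m_i = 0` for `i > j` one has
`h(A^m A_j) = (1 − q^{2(j+|m|)})/(1 − q^{2(N+|m|)}) · h(A^m)`.
(The indices of `z` and `m` are shifted to start at `0`.) -/
theorem haar_apply_Apow_mul_Apart
    {A : Type*} [Ring A] [Algebra ℂ A] [StarRing A] [StarModule ℂ A]
    (q : ℝ) (hq : q ∈ Set.Ioo (0 : ℝ) 1) (ℓ : ℕ) (hℓ : 1 ≤ ℓ)
    (z : Fin (ℓ + 1) → A)
    (hcomm : ∀ i j : Fin (ℓ + 1), i < j → z i * z j = (q : ℂ) • (z j * z i))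
    (hstar : ∀ i j : Fin (ℓ + 1), i ≠ j → star (z i) * z j = (q : ℂ) • (z j * star (z i)))
    (hrel : ∀ j : Fin ℓ,
      star (z j.succ) * z j.succ - z j.succ * star (z j.succ)
        = (1 - (q : ℂ) ^ 2) •
            ∑ i ∈ Finset.univ.filter (fun i : Fin (ℓ + 1) => (i : ℕ) ≤ (j : ℕ)),
              z i * star (z i))
    (hz0 : star (z 0) * z 0 = z 0 * star (z 0))
    (hsum : ∑ i : Fin (ℓ + 1), z i * star (z i) = 1)
    (h : A →ₗ[ℂ] ℂ) (h1 : h 1 = 1)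
    (hmod : ∀ (x : A) (j : Fin (ℓ + 1)),
      h (z j * x) = (q : ℂ) ^ (2 * (j : ℕ)) * h (x * z j))
    (hmodstar : ∀ (x : A) (j : Fin (ℓ + 1)),
      h (star (z j) * x) = ((q : ℂ) ^ (2 * (j : ℕ)))⁻¹ * h (x * star (z j)))
    (j : ℕ) (hj1 : 1 ≤ j) (hjℓ : j ≤ ℓ) (m : Fin ℓ → ℕ)
    (hm : ∀ i : Fin ℓ, j ≤ (i : ℕ) → m i = 0) :
    h (Apow z m * Apart z j)
      = ((1 - (q : ℂ) ^ (2 * (j + ∑ i, m i)))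
          / (1 - (q : ℂ) ^ (2 * ((ℓ + 1) + ∑ i, m i)))) * h (Apow z m) := by
  have hqC : (q : ℂ) ≠ 0 := by
    exact_mod_cast ne_of_gt hq.1
  set s := ∑ i, m i with hs
  set M := Apow z m with hM
  set t := ((q : ℂ) ^ 2) with ht
  -- nonvanishing of 1 - t^n for n ≥ 1
  have htn : ∀ n : ℕ, 1 ≤ n → (1 : ℂ) - t ^ n ≠ 0 := by
    intro n hn heq
    have h1' : t ^ n = 1 := by
      have := sub_eq_zero.mp heq; exact this.symm
    have hcast : t ^ n = (((q ^ 2) ^ n : ℝ) : ℂ) := by rw [ht]; push_cast; ring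
    rw [hcast] at h1'
    have h2' : (q ^ 2) ^ n = 1 := by exact_mod_cast h1'
    have hlt : (q ^ 2) ^ n < 1 := by
      apply pow_lt_one₀ (sq_nonneg q) _ (by omega)
      nlinarith [hq.1, hq.2]
    linarith
  -- modular relation in reverse form
  have hmodstar' : ∀ (x : A) (k : Fin (ℓ + 1)),
      h (x * star (z k)) = (q : ℂ) ^ (2 * (k : ℕ)) * h (star (z k) * x) := by
    intro x k
    rw [hmodstar x k, ← mul_assoc, mul_inv_cancel₀ (pow_ne_zero _ hqC), one_mul]
  -- the one-step recurrence
  have hstep : ∀ k : ℕ, j ≤ k → k ≤ ℓ →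
      (1 - t ^ (k + s)) * h (M * Apart z (k + 1))
        = (1 - t ^ (k + s + 1)) * h (M * Apart z k) := by
    intro k hjk hkℓ
    set K : Fin (ℓ + 1) := ⟨k, by omega⟩ with hK
    -- star z_K * z_K in terms of z_K * star z_K and Apart z k
    have e3 : star (z K) * z K = (1 - t) • Apart z k + z K * star (z K) := by
      have hj' : k - 1 < ℓ := by omega
      have hsucc : (⟨k - 1, hj'⟩ : Fin ℓ).succ = K := by
        ext; simp [hK]; omega
      have hfil : Finset.univ.filter (fun i : Fin (ℓ + 1) => (i : ℕ) ≤ ((⟨k - 1, hj'⟩ : Fin ℓ) : ℕ))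
          = Finset.univ.filter (fun i : Fin (ℓ + 1) => (i : ℕ) < k) := by
        ext i; simp only [Finset.mem_filter, Finset.mem_univ, true_and]; omega
      have := hrel ⟨k - 1, hj'⟩
      rw [hsucc, hfil] at this
      rw [sub_eq_iff_eq_add] at this
      rw [this, Apart, ht]
    have e2 : star (z K) * (M * z K) = (t ^ s) • (M * (star (z K) * z K)) := by
      rw [← mul_assoc, starz_mul_Apow q z hcomm hstar m K j (by simp [hK]; omega) hm, smul_mul_assoc,
        mul_assoc, ← ht, ← hs]
    have e1 : h (M * (z K * star (z K))) = (q : ℂ) ^ (2 * (K : ℕ)) * h (star (z K) * (M * z K)) := by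
      rw [← mul_assoc]; exact hmodstar' _ K
    have e4 : h (M * (star (z K) * z K))
        = (1 - t) * h (M * Apart z k) + h (M * (z K * star (z K))) := by
      rw [e3, mul_add, mul_smul_comm, map_add, map_smul]
      rfl
    have hKval : ((K : ℕ) : ℕ) = k := rfl
    have hqt : (q : ℂ) ^ (2 * (K : ℕ)) = t ^ k := by
      rw [ht, ← pow_mul, hKval, mul_comm]
    have hb : h (M * (z K * star (z K)))
        = t ^ k * (t ^ s * ((1 - t) * h (M * Apart z k) + h (M * (z K * star (z K))))) := by
      conv_lhs => rw [e1, e2, map_smul, e4]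
      rw [hqt, smul_eq_mul]
    have hb' : (1 - t ^ (k + s)) * h (M * (z K * star (z K)))
        = t ^ (k + s) * (1 - t) * h (M * Apart z k) := by
      linear_combination hb
    have hS : h (M * Apart z (k + 1)) = h (M * Apart z k) + h (M * (z K * star (z K))) := by
      rw [Apart_succ z k (by omega), mul_add, map_add]
    linear_combination (1 - t ^ (k + s)) * hS + hb'
  -- the telescoping induction
  have claim : ∀ d : ℕ, j + d ≤ ℓ + 1 →
      (1 - t ^ (j + s)) * h (M * Apart z (j + d)) = (1 - t ^ (j + d + s)) * h (M * Apart z j) := by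
    intro d
    induction d with
    | zero => intro _; simp
    | succ d ih =>
        intro hd
        have ih' := ih (by omega)
        have hst := hstep (j + d) (by omega) (by omega)
        have hne := htn (j + d + s) (by omega)
        rw [show j + (d + 1) = j + d + 1 by omega]
        apply mul_left_cancel₀ hne
        linear_combination (1 - t ^ (j + s)) * hst + (1 - t ^ (j + d + s + 1)) * ih'
  have hfin := claim (ℓ + 1 - j) (by omega)
  rw [show j + (ℓ + 1 - j) = ℓ + 1 by omega] at hfin
  rw [Apart_top z hsum, mul_one] at hfin
  have hne := htn (ℓ + 1 + s) (by omega)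
  have hq1 : (q : ℂ) ^ (2 * (j + s)) = t ^ (j + s) := by rw [ht, ← pow_mul, mul_comm]
  have hq2 : (q : ℂ) ^ (2 * (ℓ + 1 + s)) = t ^ (ℓ + 1 + s) := by rw [ht, ← pow_mul, mul_comm]
  rw [hq1, hq2, div_mul_eq_mul_div, eq_div_iff hne]
  linear_combination -hfin

end
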